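/- Let $x_1 < \dots < x_n$ with $x_1 \geq 0$, probabilities $q_k \in (0,1)$ summing to 1, $\mu = \sum_k q_k x_k$, and for each $\lambda > 0$ let $x^*(\lambda)$ be the unique solution in $(x_n - \lambda, x_n)$ of $x^* = \lambda \sum_k \frac{q_k x_k}{\lambda + x^* - x_k}$. Then $x^*(\lambda) \to \mu$ as $\lambda \to \infty$. -/
import Mathlib


/-- As the redraw rate tends to infinity, the heritable-risk growth rate tends to
the mean. -/
theorem stmt_6 (n : ℕ) (hn : 2 ≤ n) (x q : Fin n → ℝ)
    (hx : StrictMono x) (hx0 : 0 ≤ x ⟨0, by omega⟩)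
    (hq : ∀ k, q k ∈ Set.Ioo (0 : ℝ) 1) (hqsum : ∑ k, q k = 1)
    (xs : ℝ → ℝ)
    (hxs : ∀ lam : ℝ, 0 < lam →
      xs lam ∈ Set.Ioo (x ⟨n - 1, by omega⟩ - lam) (x ⟨n - 1, by omega⟩) ∧
      xs lam = lam * ∑ k, q k * x k / (lam + xs lam - x k)) :
    Filter.Tendsto xs Filter.atTop (nhds (∑ k, q k * x k)) := by
  set i0 : Fin n := ⟨0, by omega⟩ with hi0
  set iN : Fin n := ⟨n - 1, by omega⟩ with hiN
  set M : ℝ := x iN with hM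
  set μ : ℝ := ∑ k, q k * x k with hμ
  -- basic facts
  have hxk_nonneg : ∀ k, 0 ≤ x k := fun k =>
    le_trans hx0 (hx.monotone (by simp [hi0, Fin.le_def]))
  have hxk_le : ∀ k, x k ≤ M := fun k =>
    hx.monotone (by simp [hiN, Fin.le_def]; omega)
  have hM0 : 0 ≤ M := hxk_nonneg iN
  have hμ0 : 0 ≤ μ := Finset.sum_nonneg fun k _ =>
    mul_nonneg (hq k).1.le (hxk_nonneg k)
  -- positivity of denominators and of xs
  have hden : ∀ lam : ℝ, 0 < lam → ∀ k, 0 < lam + xs lam - x k := by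
    intro lam hlam k
    have h1 := (hxs lam hlam).1.1
    have h2 := hxk_le k
    linarith
  have hxs_nonneg : ∀ lam : ℝ, 0 < lam → 0 ≤ xs lam := by
    intro lam hlam
    rw [(hxs lam hlam).2]
    apply mul_nonneg hlam.le
    apply Finset.sum_nonneg
    intro k _
    exact div_nonneg (mul_nonneg (hq k).1.le (hxk_nonneg k)) (hden lam hlam k).le
  -- key bound for lam > M
  have hbound : ∀ lam : ℝ, M < lam → |xs lam - μ| ≤ μ * M / (lam - M) := by
    intro lam hlam
    have hlam0 : 0 < lam := lt_of_le_of_lt hM0 hlam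
    have hxsl := (hxs lam hlam0).1.2
    have hxsg := hxs_nonneg lam hlam0
    have hdiff : xs lam - μ = ∑ k, q k * x k * (x k - xs lam) / (lam + xs lam - x k) := by
      nth_rewrite 1 [(hxs lam hlam0).2]
      rw [hμ, Finset.mul_sum, ← Finset.sum_sub_distrib]
      apply Finset.sum_congr rfl
      intro k _
      have hd := (hden lam hlam0 k).ne'
      field_simp
      ring
    rw [hdiff]
    calc |∑ k, q k * x k * (x k - xs lam) / (lam + xs lam - x k)|
        ≤ ∑ k, |q k * x k * (x k - xs lam) / (lam + xs lam - x k)| :=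
          Finset.abs_sum_le_sum_abs _ _
      _ ≤ ∑ k, q k * x k * (M / (lam - M)) := by
          apply Finset.sum_le_sum
          intro k _
          have hd := hden lam hlam0 k
          rw [abs_div, abs_of_pos hd, abs_mul, abs_of_nonneg (mul_nonneg (hq k).1.le (hxk_nonneg k))]
          rw [div_le_iff₀ hd]
          have habs : |x k - xs lam| ≤ M := by
            rw [abs_le]
            constructor
            · have := hxk_nonneg k; linarith
            · have := hxk_le k; linarith
          have h1 : M / (lam - M) * (lam + xs lam - x k) ≥ M / (lam - M) * (lam - M) := by
            apply mul_le_mul_of_nonneg_left _ (div_nonneg hM0 (by linarith))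
            have := hxk_le k; linarith
          have h2 : M / (lam - M) * (lam - M) = M :=
            div_mul_cancel₀ M (by linarith : lam - M ≠ 0)
          have hc : 0 ≤ q k * x k := mul_nonneg (hq k).1.le (hxk_nonneg k)
          calc q k * x k * |x k - xs lam|
              ≤ q k * x k * M := mul_le_mul_of_nonneg_left habs hc
            _ = q k * x k * (M / (lam - M) * (lam - M)) := by rw [h2]
            _ ≤ q k * x k * (M / (lam - M) * (lam + xs lam - x k)) :=
                mul_le_mul_of_nonneg_left h1 hc
            _ = q k * x k * (M / (lam - M)) * (lam + xs lam - x k) := by ring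
      _ = μ * M / (lam - M) := by
          rw [← Finset.sum_mul, ← hμ]; ring
  -- squeeze
  have hg : Filter.Tendsto (fun lam : ℝ => μ * M / (lam - M)) Filter.atTop (nhds 0) := by
    apply Filter.Tendsto.div_atTop tendsto_const_nhds
    exact Filter.tendsto_atTop_add_const_right _ (-M) Filter.tendsto_id |>.congr (by intro z; simp only [id]; ring)
  have h0 : Filter.Tendsto (fun lam => xs lam - μ) Filter.atTop (nhds 0) := by
    apply squeeze_zero_norm' _ hg
    filter_upwards [Filter.eventually_gt_atTop M] with lam hlam
    simpa using hbound lam hlam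
  have := h0.add (tendsto_const_nhds (x := μ) (f := Filter.atTop (α := ℝ)))
  simpa using this
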